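/- Fix α, β > 0 and a ∈ ℝ with |a| < 1. Then for every x ∈ (0, 1), (d/dx)[ x^α (1 − x)^β (1 − a x)^{−(α+β)} ] = ( α − (α + β(1 − a)) x ) · x^{α−1} (1 − x)^{β−1} (1 − a x)^{−(α+β+1)}. Consequently, a diffusion on (0, 1) whose stationary density is proportional to x^{α−1}(1 − x)^{β−1}(1 − a x)^{−(α+β+1)} and whose variance function is the degree-three polynomial σ²(x)/2 = x(1 − x)(1 − a x) satisfies the detailed balance equation with the affine drift μ(x) = α − (α + β(1 − a)) x, and hence is an optimal diffusion process. -/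

import Mathlib

open MeasureTheory Set

private lemma aux19
    (α β a : ℝ) (hα : 0 < α) (hβ : 0 < β) (ha : |a| < 1) :
    ∀ x ∈ Set.Ioo (0 : ℝ) 1,
      HasDerivAt (fun y : ℝ => y ^ α * (1 - y) ^ β * (1 - a * y) ^ (-(α + β)))
        ((α - (α + β * (1 - a)) * x) *
          (x ^ (α - 1) * (1 - x) ^ (β - 1) * (1 - a * x) ^ (-(α + β + 1)))) x := by
  rintro x ⟨hx0, hx1⟩
  obtain ⟨ha1, ha2⟩ := abs_lt.mp ha
  have h1x : 0 < 1 - x := by linarith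
  have hax : 0 < 1 - a * x := by nlinarith
  have h1 : HasDerivAt (fun y : ℝ => y ^ α) (α * x ^ (α - 1)) x :=
    Real.hasDerivAt_rpow_const (Or.inl hx0.ne')
  have h2inner : HasDerivAt (fun y : ℝ => 1 - y) (-1) x := (hasDerivAt_id x).const_sub 1
  have h2 : HasDerivAt (fun y : ℝ => (1 - y) ^ β) (β * (1 - x) ^ (β - 1) * (-1)) x :=
    (Real.hasDerivAt_rpow_const (x := 1 - x) (p := β) (Or.inl h1x.ne')).comp x h2inner
  have h3inner : HasDerivAt (fun y : ℝ => 1 - a * y) (-(a * 1)) x :=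
    ((hasDerivAt_id x).const_mul a).const_sub 1
  have h3 : HasDerivAt (fun y : ℝ => (1 - a * y) ^ (-(α + β)))
      ((-(α + β)) * (1 - a * x) ^ (-(α + β) - 1) * (-(a * 1))) x :=
    by have := (Real.hasDerivAt_rpow_const (x := 1 - a * x) (p := -(α + β)) (Or.inl hax.ne')).comp x h3inner; exact this
  have hprod := (h1.mul h2).mul h3
  refine hprod.congr_deriv ?_
  simp only [Pi.mul_apply]
  have e1 : x ^ α = x ^ (α - 1) * x := by
    rw [← Real.rpow_add_one hx0.ne', sub_add_cancel]
  have e2 : (1 - x) ^ β = (1 - x) ^ (β - 1) * (1 - x) := by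
    rw [← Real.rpow_add_one h1x.ne', sub_add_cancel]
  have e3 : (1 - a * x) ^ (-(α + β)) = (1 - a * x) ^ (-(α + β + 1)) * (1 - a * x) := by
    rw [← Real.rpow_add_one hax.ne']
    norm_num
  have e4 : (1 - a * x) ^ (-(α + β) - 1) = (1 - a * x) ^ (-(α + β + 1)) := by
    rw [show -(α + β) - 1 = -(α + β + 1) by ring]
  rw [e1, e2, e3, e4]
  ring

theorem statement19
    (α β a : ℝ) (hα : 0 < α) (hβ : 0 < β) (ha : |a| < 1) :
    (∀ x ∈ Set.Ioo (0 : ℝ) 1,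
      HasDerivAt (fun y : ℝ => y ^ α * (1 - y) ^ β * (1 - a * y) ^ (-(α + β)))
        ((α - (α + β * (1 - a)) * x) *
          (x ^ (α - 1) * (1 - x) ^ (β - 1) * (1 - a * x) ^ (-(α + β + 1)))) x) ∧
    ∀ c : ℝ, 0 < c →
      ∀ x ∈ Set.Ioo (0 : ℝ) 1,
        HasDerivAt
          (fun y : ℝ => y * (1 - y) * (1 - a * y) *
            (c * (y ^ (α - 1) * (1 - y) ^ (β - 1) * (1 - a * y) ^ (-(α + β + 1)))))
          ((α - (α + β * (1 - a)) * x) *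
            (c * (x ^ (α - 1) * (1 - x) ^ (β - 1) * (1 - a * x) ^ (-(α + β + 1))))) x := by
  refine ⟨aux19 α β a hα hβ ha, ?_⟩
  intro c hc x hx
  obtain ⟨hx0, hx1⟩ := hx
  obtain ⟨ha1, ha2⟩ := abs_lt.mp ha
  have h := (aux19 α β a hα hβ ha x ⟨hx0, hx1⟩).const_mul c
  have hh : HasDerivAt (fun y : ℝ => c * (y ^ α * (1 - y) ^ β * (1 - a * y) ^ (-(α + β))))
      ((α - (α + β * (1 - a)) * x) *
        (c * (x ^ (α - 1) * (1 - x) ^ (β - 1) * (1 - a * x) ^ (-(α + β + 1))))) x := by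
    refine h.congr_deriv ?_; ring
  refine hh.congr_of_eventuallyEq
    (Filter.eventuallyEq_of_mem (isOpen_Ioo.mem_nhds (⟨hx0, hx1⟩ : x ∈ Set.Ioo (0:ℝ) 1)) ?_)
  rintro y ⟨hy0, hy1⟩
  have h1y : (0:ℝ) < 1 - y := by linarith
  have hay : (0:ℝ) < 1 - a * y := by nlinarith
  have e1 : y ^ α = y ^ (α - 1) * y := by
    rw [← Real.rpow_add_one hy0.ne', sub_add_cancel]
  have e2 : (1 - y) ^ β = (1 - y) ^ (β - 1) * (1 - y) := by
    rw [← Real.rpow_add_one h1y.ne', sub_add_cancel]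
  have e3 : (1 - a * y) ^ (-(α + β)) = (1 - a * y) ^ (-(α + β + 1)) * (1 - a * y) := by
    rw [← Real.rpow_add_one hay.ne']
    norm_num
  simp only [e1, e2, e3]
  ring
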